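/- Let G > 0, χ solve χ'' + G/χ² = 0 with χ > 0, χ' < 0, and suppose χ(t) → 0 as t → t* < ∞. Then there exists c > 0 (explicitly c = (9G/2)^{1/3}) such that χ(t)/(t* - t)^{2/3} → c as t → t*⁻. -/

import Mathlib

noncomputable section
open Real Set Filter Topology

/-- Universal `2/3` blow-up rate for the dust collapse ODE: if `χ`
solves `χ'' + G/χ² = 0` with `χ > 0`, `χ' < 0` and `χ(t) → 0` as `t → t*⁻`,
then `χ(t)/(t*-t)^{2/3} → (9G/2)^{1/3}`. -/
theorem dust_collapse_rate (G tstar : ℝ) (χ : ℝ → ℝ)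
    (hG : 0 < G) (ht : 0 < tstar)
    (hsol : ∀ t ∈ Ico (0:ℝ) tstar, 0 < χ t ∧ deriv χ t < 0 ∧
      HasDerivAt χ (deriv χ t) t ∧
      HasDerivAt (deriv χ) (deriv (deriv χ) t) t ∧
      deriv (deriv χ) t + G / (χ t)^2 = 0)
    (hlim : Tendsto χ (𝓝[<] tstar) (𝓝 0)) :
    Tendsto (fun t => χ t / (tstar - t) ^ ((2:ℝ)/3)) (𝓝[<] tstar)
      (𝓝 ((9 * G / 2) ^ ((1:ℝ)/3))) := by
  set E0 : ℝ := (deriv χ 0)^2/2 - G / χ 0 with hE0def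
  -- The energy has zero derivative on `Ico 0 tstar`
  have hEderiv : ∀ x ∈ Ico (0:ℝ) tstar,
      HasDerivAt (fun s => (deriv χ s)^2/2 - G / χ s) 0 x := by
    intro x hx
    obtain ⟨hχpos, hχ'neg, hd1, hd2, hode⟩ := hsol x hx
    have h1 : HasDerivAt (fun s => (deriv χ s)^2/2)
        ((2 * deriv χ x ^ 1 * deriv (deriv χ) x)/2) x := (hd2.pow 2).div_const 2
    have h2 : HasDerivAt (fun s => G / χ s)
        ((0 * χ x - G * deriv χ x)/(χ x)^2) x :=
      (hasDerivAt_const x G).div hd1 hχpos.ne'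
    have h3 := h1.sub h2
    have hdd : deriv (deriv χ) x = -(G / (χ x)^2) := by linarith
    convert h3 using 1
    case e'_4 => rfl
    case e'_5 => rfl
    case e'_8 => rfl
    rw [hdd]
    field_simp
    ring
  -- Energy conservation
  have henergy : ∀ t ∈ Ico (0:ℝ) tstar, (deriv χ t)^2/2 - G / χ t = E0 := by
    intro t htmem
    obtain ⟨ht0, httstar⟩ := htmem
    have key := constant_of_has_deriv_right_zero
      (f := fun s => (deriv χ s)^2/2 - G / χ s) (a := 0) (b := t)
      (fun x hx => ((hEderiv x ⟨hx.1, lt_of_le_of_lt hx.2 httstar⟩).continuousAt).continuousWithinAt)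
      (fun x hx => ((hEderiv x ⟨hx.1, hx.2.trans httstar⟩)).hasDerivWithinAt)
    exact key t (right_mem_Icc.mpr ht0)
  -- key pointwise identity
  have hsq : ∀ t ∈ Ico (0:ℝ) tstar,
      Real.sqrt (χ t) * deriv χ t = -Real.sqrt (2*E0*χ t + 2*G) := by
    intro t htmem
    obtain ⟨hχpos, hχ'neg, _, _, _⟩ := hsol t htmem
    have hE := henergy t htmem
    have hmul : χ t * (deriv χ t)^2 = 2*E0*χ t + 2*G := by
      field_simp at hE
      nlinarith [hχpos.ne']
    have h1 : Real.sqrt ((deriv χ t)^2) = -deriv χ t := by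
      rw [Real.sqrt_sq_eq_abs, abs_of_neg hχ'neg]
    calc Real.sqrt (χ t) * deriv χ t
        = -(Real.sqrt (χ t) * Real.sqrt ((deriv χ t)^2)) := by rw [h1]; ring
      _ = -Real.sqrt (χ t * (deriv χ t)^2) := by rw [Real.sqrt_mul hχpos.le]
      _ = -Real.sqrt (2*E0*χ t + 2*G) := by rw [hmul]
  set f : ℝ → ℝ := fun t => χ t * Real.sqrt (χ t) with hfdef
  set F : ℝ → ℝ := fun t => -(3/2 * Real.sqrt (2*E0*χ t + 2*G)) with hFdef
  have hfderiv : ∀ t ∈ Ico (0:ℝ) tstar, HasDerivAt f (F t) t := by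
    intro t htmem
    obtain ⟨hχpos, hχ'neg, hd1, _, _⟩ := hsol t htmem
    have hs : 0 < Real.sqrt (χ t) := Real.sqrt_pos.mpr hχpos
    have h := hd1.mul (hd1.sqrt hχpos.ne')
    convert h using 1
    case e'_4 => rfl
    case e'_5 => rfl
    case e'_8 => rfl
    have hkey := hsq t htmem
    have hχeq : χ t = Real.sqrt (χ t) * Real.sqrt (χ t) :=
      (Real.mul_self_sqrt hχpos.le).symm
    have hkey' : Real.sqrt (2*E0*χ t + 2*G) = -(Real.sqrt (χ t) * deriv χ t) := by
      linarith
    rw [hFdef]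
    simp only [hkey']
    field_simp
    linear_combination deriv χ t * Real.sq_sqrt hχpos.le
  -- limits
  have hmemIoo : Ioo (0:ℝ) tstar ∈ 𝓝[<] tstar :=
    Ioo_mem_nhdsLT_of_mem ⟨ht, le_refl tstar⟩
  set L : ℝ := 3/2 * Real.sqrt (2*G) with hLdef
  have hLpos : 0 < L := by
    have : 0 < Real.sqrt (2*G) := Real.sqrt_pos.mpr (by linarith)
    positivity
  have hF_lim : Tendsto F (𝓝[<] tstar) (𝓝 (-L)) := by
    have hc : Continuous (fun x : ℝ => -(3/2 * Real.sqrt (2*E0*x + 2*G))) := by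
      continuity
    have h := (hc.tendsto 0).comp hlim
    have heq : (fun t => -(3/2 * Real.sqrt (2*E0*χ t + 2*G)))
        = F := rfl
    rw [Function.comp_def, heq] at h
    convert h using 2
    rw [hLdef]
    norm_num
  have hf_lim : Tendsto f (𝓝[<] tstar) (𝓝 0) := by
    have hs : Tendsto (fun t => Real.sqrt (χ t)) (𝓝[<] tstar) (𝓝 (Real.sqrt 0)) :=
      (Real.continuous_sqrt.continuousAt.tendsto).comp hlim
    have := hlim.mul hs
    simpa using this
  have hg_lim : Tendsto (fun t => tstar - t) (𝓝[<] tstar) (𝓝 0) := by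
    have : Tendsto (fun t : ℝ => tstar - t) (𝓝 tstar) (𝓝 (tstar - tstar)) :=
      (continuous_const.sub continuous_id).continuousAt.tendsto
    simpa using this.mono_left nhdsWithin_le_nhds
  -- L'Hôpital
  have hmain : Tendsto (fun t => f t / (tstar - t)) (𝓝[<] tstar) (𝓝 L) := by
    apply HasDerivAt.lhopital_zero_nhdsLT (f' := F) (g' := fun _ => (-1 : ℝ))
    · filter_upwards [hmemIoo] with t htm
      exact hfderiv t ⟨htm.1.le, htm.2⟩
    · filter_upwards with t
      simpa using (hasDerivAt_id t).const_sub tstar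
    · filter_upwards with t; norm_num
    · exact hf_lim
    · exact hg_lim
    · have h := hF_lim.neg
      simp only [neg_neg] at h
      have heq : (fun t => F t / (-1:ℝ)) = fun t => -F t := by funext t; ring
      rw [heq]
      exact h
  -- compose with rpow
  have hrpow : Tendsto (fun x : ℝ => x ^ ((2:ℝ)/3)) (𝓝 L) (𝓝 (L ^ ((2:ℝ)/3))) :=
    (Real.continuousAt_rpow_const L ((2:ℝ)/3) (Or.inl hLpos.ne')).tendsto
  have hcomp := hrpow.comp hmain
  have hLval : L ^ ((2:ℝ)/3) = (9 * G / 2) ^ ((1:ℝ)/3) := by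
    have hL2 : L ^ (2:ℕ) = 9 * G / 2 := by
      rw [hLdef, mul_pow, sq_sqrt (by linarith : (0:ℝ) ≤ 2*G)]
      ring
    rw [show ((2:ℝ)/3) = 2 * (1/3) by norm_num, Real.rpow_mul hLpos.le,
      Real.rpow_two, hL2]
  rw [← hLval]
  apply hcomp.congr'
  filter_upwards [hmemIoo] with t htm
  obtain ⟨hχpos, _, _, _, _⟩ := hsol t ⟨htm.1.le, htm.2⟩
  have hpos : 0 < tstar - t := by linarith [htm.2]
  have hfpos : 0 ≤ f t := by
    have := Real.sqrt_nonneg (χ t); positivity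
  simp only [Function.comp]
  rw [Real.div_rpow hfpos hpos.le]
  congr 1
  have heq : f t = χ t ^ ((3:ℝ)/2) := by
    rw [hfdef]
    simp only
    rw [Real.sqrt_eq_rpow, show ((3:ℝ)/2) = 1 + 1/2 by norm_num,
      Real.rpow_add hχpos, Real.rpow_one]
  rw [heq, ← Real.rpow_mul hχpos.le]
  norm_num
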